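/- Let K be a symmetric n×n real matrix with an orthonormal eigenbasis v₁, …, vₙ and corresponding eigenvalues λ₁ ≥ … ≥ λₙ > 0, let 1 ≤ k ≤ n, and let g : ℝ → ℝ satisfy g(λᵢ) > 0 for all 1 ≤ i ≤ k. Then the matrix S = I − Σ_{i=1}^{k} (1 − g(λᵢ)/λᵢ) vᵢ vᵢᵀ is symmetric positive definite. -/

import Mathlib

open Matrix

/-- Let `K` be symmetric with orthonormal eigenbasis `v i` and
eigenvalues `λ 0 ≥ … ≥ λ (n-1) > 0`, let `1 ≤ k ≤ n` and let `g` satisfy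
`g (λ i) > 0` for the top `k` indices. Then the MSK preconditioner
`S = I − Σ_{i < k} (1 − g(λ i)/λ i) vᵢ vᵢᵀ` is symmetric positive definite. -/
theorem msk_preconditioner_posDef
    {n : ℕ} (K : Matrix (Fin n) (Fin n) ℝ) (hKsymm : K.IsSymm)
    (v : Fin n → (Fin n → ℝ)) (lam : Fin n → ℝ)
    (horth : ∀ i j : Fin n, v i ⬝ᵥ v j = if i = j then 1 else 0)
    (heig : ∀ i : Fin n, K.mulVec (v i) = lam i • v i)
    (hdesc : ∀ i j : Fin n, i ≤ j → lam j ≤ lam i)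
    (hpos : ∀ i : Fin n, 0 < lam i)
    (k : ℕ) (hk1 : 1 ≤ k) (hkn : k ≤ n)
    (g : ℝ → ℝ) (hg : ∀ i : Fin n, (i : ℕ) < k → 0 < g (lam i))
    (S : Matrix (Fin n) (Fin n) ℝ)
    (hS : S = 1 - ∑ i ∈ Finset.univ.filter (fun i : Fin n => (i : ℕ) < k),
        (1 - g (lam i) / lam i) • vecMulVec (v i) (v i)) :
    S.PosDef := by
  classical
  -- the matrix of eigenvectors as columns
  set V : Matrix (Fin n) (Fin n) ℝ := Matrix.of (fun a i => v i a) with hV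
  have hVtV : Vᵀ * V = 1 := by
    ext i j
    simpa [hV, Matrix.mul_apply, Matrix.one_apply, dotProduct] using horth i j
  have hVVt : V * Vᵀ = 1 := mul_eq_one_comm.mp hVtV
  -- the modified eigenvalues
  set d : Fin n → ℝ := fun i => if (i : ℕ) < k then g (lam i) / lam i else 1 with hd
  have hdpos : ∀ i, 0 < d i := by
    intro i
    by_cases h : (i : ℕ) < k
    · simp only [hd, if_pos h]
      exact div_pos (hg i h) (hpos i)
    · simp [hd, h]
  -- factorization S = V * diag d * Vᵀ
  have hfact : S = V * Matrix.diagonal d * Vᵀ := by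
    have hone : (1 : Matrix (Fin n) (Fin n) ℝ) = V * Vᵀ := hVVt.symm
    ext a b
    have h1 : (V * Matrix.diagonal d * Vᵀ) a b = ∑ i, d i * (v i a * v i b) := by
      simp [Matrix.mul_apply, Matrix.diagonal, hV, Finset.sum_comm]
      congr 1; ext i
      by_cases h : (i : ℕ) < k <;> ring_nf <;> simp [Finset.mul_sum, mul_comm, mul_left_comm]
    rw [hS, h1]
    have h2 : (1 : Matrix (Fin n) (Fin n) ℝ) a b = ∑ i, v i a * v i b := by
      rw [hone]; simp [Matrix.mul_apply, hV]
    simp only [Matrix.sub_apply, h2, Matrix.sum_apply, Matrix.smul_apply,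
      Matrix.vecMulVec_apply, smul_eq_mul]
    rw [Finset.sum_filter]
    rw [← Finset.sum_sub_distrib]
    congr 1; ext i
    by_cases h : (i : ℕ) < k
    · simp [hd, h]; ring
    · simp [hd, h]
  have hD : (Matrix.diagonal d).PosDef := Matrix.posDef_diagonal_iff.mpr fun i => hdpos i
  refine Matrix.posDef_iff_dotProduct_mulVec.mpr ⟨?_, ?_⟩
  · -- symmetry
    rw [hfact]
    unfold Matrix.IsHermitian
    rw [Matrix.conjTranspose_mul, Matrix.conjTranspose_mul]
    simp [Matrix.diagonal_conjTranspose, Matrix.mul_assoc]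
  · intro x hx
    have hy : Vᵀ.mulVec x ≠ 0 := by
      intro h
      apply hx
      have : V.mulVec (Vᵀ.mulVec x) = x := by
        rw [Matrix.mulVec_mulVec, hVVt, Matrix.one_mulVec]
      rw [h, Matrix.mulVec_zero] at this
      exact this.symm
    have hpos' := hD.dotProduct_mulVec_pos hy
    have heq : star x ⬝ᵥ S.mulVec x
        = star (Vᵀ.mulVec x) ⬝ᵥ (Matrix.diagonal d).mulVec (Vᵀ.mulVec x) := by
      rw [hfact, ← Matrix.mulVec_mulVec, ← Matrix.mulVec_mulVec, star_trivial,
        star_trivial, Matrix.dotProduct_mulVec, ← Matrix.transpose_transpose V,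
        Matrix.vecMul_transpose, Matrix.transpose_transpose]
    rw [heq]
    exact hpos'
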